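/- Let μ be the Haar probability measure on the compact group U(n) of n×n complex unitary matrices and let f : ℂⁿ × ℂⁿ → ℝ be a bounded measurable function. Define f̃(a, b) = ∫ f(U.mulVec a, U.mulVec b) dμ(U). Then for all a, a', b, b' ∈ ℂⁿ with ‖a‖ = ‖a'‖, ‖b‖ = ‖b'‖ and ⟨a, b⟩ = ⟨a', b'⟩, one has f̃(a, b) = f̃(a', b'). -/

import Mathlib

open MeasureTheory Matrix

/-- The unitary group carries its Borel σ-algebra. -/
noncomputable instance unitaryGroupMeasurableSpace (n : ℕ) :
    MeasurableSpace (Matrix.unitaryGroup (Fin n) ℂ) := borel _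

instance unitaryGroupBorelSpace (n : ℕ) :
    BorelSpace (Matrix.unitaryGroup (Fin n) ℂ) := ⟨rfl⟩

/-- `ℂⁿ` carries its Borel σ-algebra. -/
noncomputable instance euclideanSpaceMeasurableSpace (n : ℕ) :
    MeasurableSpace (EuclideanSpace ℂ (Fin n)) := borel _

instance euclideanSpaceBorelSpace (n : ℕ) :
    BorelSpace (EuclideanSpace ℂ (Fin n)) := ⟨rfl⟩

section Aux

variable {n : ℕ}

instance unitaryGroupTopGroup (n : ℕ) :
    IsTopologicalGroup (Matrix.unitaryGroup (Fin n) ℂ) where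
  continuous_inv := by
    apply continuous_induced_rng.2
    exact continuous_star.comp continuous_subtype_val

instance unitaryGroupSecondCountable (n : ℕ) :
    SecondCountableTopology (Matrix.unitaryGroup (Fin n) ℂ) := by
  have : SecondCountableTopology (Matrix (Fin n) (Fin n) ℂ) :=
    inferInstanceAs (SecondCountableTopology (Fin n → Fin n → ℂ))
  exact TopologicalSpace.Subtype.secondCountableTopology _

instance unitaryGroupCompactSpace (n : ℕ) :
    CompactSpace (Matrix.unitaryGroup (Fin n) ℂ) := by
  have hB : IsCompact (Set.pi Set.univ fun _ : Fin n =>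
      (Set.pi Set.univ fun _ : Fin n => Metric.closedBall (0 : ℂ) 1)) :=
    isCompact_univ_pi fun _ => isCompact_univ_pi fun _ => isCompact_closedBall 0 1
  have hclosed : IsClosed ((Matrix.unitaryGroup (Fin n) ℂ : Set (Matrix (Fin n) (Fin n) ℂ))) := by
    have : (Matrix.unitaryGroup (Fin n) ℂ : Set (Matrix (Fin n) (Fin n) ℂ)) =
        (fun A : Matrix (Fin n) (Fin n) ℂ => star A * A) ⁻¹' {1} := by
      ext A
      simp [Matrix.mem_unitaryGroup_iff']
    rw [this]
    exact isClosed_singleton.preimage (continuous_star.matrix_mul continuous_id)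
  have hcomp : IsCompact ((Matrix.unitaryGroup (Fin n) ℂ : Set (Matrix (Fin n) (Fin n) ℂ))) := by
    refine hB.of_isClosed_subset hclosed ?_
    intro A hA
    intro i _
    intro j _
    simpa using entry_norm_bound_of_unitary hA i j
  exact isCompact_iff_compactSpace.mp hcomp

/-- Existence of a unitary matrix sending one pair to another with the same Gram data. -/
theorem exists_unitary_pair (a a' b b' : EuclideanSpace ℂ (Fin n))
    (ha : ‖a‖ = ‖a'‖) (hb : ‖b‖ = ‖b'‖)
    (hab : (inner ℂ a b : ℂ) = inner ℂ a' b') :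
    ∃ V : Matrix.unitaryGroup (Fin n) ℂ,
      (V : Matrix (Fin n) (Fin n) ℂ).mulVec a' = a ∧
      (V : Matrix (Fin n) (Fin n) ℂ).mulVec b' = b := by
  classical
  -- the two parametrizing linear maps
  let L : (ℂ × ℂ) →ₗ[ℂ] EuclideanSpace ℂ (Fin n) :=
    (LinearMap.fst ℂ ℂ ℂ).smulRight a + (LinearMap.snd ℂ ℂ ℂ).smulRight b
  let L' : (ℂ × ℂ) →ₗ[ℂ] EuclideanSpace ℂ (Fin n) :=
    (LinearMap.fst ℂ ℂ ℂ).smulRight a' + (LinearMap.snd ℂ ℂ ℂ).smulRight b'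
  have hLapp : ∀ p : ℂ × ℂ, L p = p.1 • a + p.2 • b := fun p => rfl
  have hL'app : ∀ p : ℂ × ℂ, L' p = p.1 • a' + p.2 • b' := fun p => rfl
  have haa : (inner ℂ a a : ℂ) = inner ℂ a' a' := by
    rw [inner_self_eq_norm_sq_to_K, inner_self_eq_norm_sq_to_K, ha]
  have hbb : (inner ℂ b b : ℂ) = inner ℂ b' b' := by
    rw [inner_self_eq_norm_sq_to_K, inner_self_eq_norm_sq_to_K, hb]
  have hba : (inner ℂ b a : ℂ) = inner ℂ b' a' := by
    rw [← inner_conj_symm, hab, inner_conj_symm]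
  have hinner : ∀ p q : ℂ × ℂ, (inner ℂ (L p) (L q) : ℂ) = inner ℂ (L' p) (L' q) := by
    intro p q
    rw [hLapp, hLapp, hL'app, hL'app]
    simp only [inner_add_left, inner_add_right, inner_smul_left, inner_smul_right]
    rw [haa, hbb, hab, hba]
  have hnorm : ∀ p : ℂ × ℂ, ‖L p‖ = ‖L' p‖ := by
    intro p
    rw [← sq_eq_sq₀ (norm_nonneg _) (norm_nonneg _),
      norm_sq_eq_re_inner (𝕜 := ℂ), norm_sq_eq_re_inner (𝕜 := ℂ), hinner p p]
  have hker : LinearMap.ker L' ≤ LinearMap.ker L := by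
    intro p hp
    rw [LinearMap.mem_ker] at hp ⊢
    have : ‖L p‖ = 0 := by rw [hnorm, hp, norm_zero]
    exact norm_eq_zero.1 this
  -- isometry on the range of L'
  let φ : ↥(LinearMap.range L') →ₗ[ℂ] EuclideanSpace ℂ (Fin n) :=
    ((LinearMap.ker L').liftQ L hker).comp (L'.quotKerEquivRange.symm : _ →ₗ[ℂ] _)
  have hφ : ∀ p : ℂ × ℂ, ∀ h : L' p ∈ LinearMap.range L', φ ⟨L' p, h⟩ = L p := by
    intro p h
    have h1 : L'.quotKerEquivRange.symm ⟨L' p, h⟩ = (LinearMap.ker L').mkQ p :=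
      L'.quotKerEquivRange_symm_apply_image p h
    simp only [φ, LinearMap.comp_apply, LinearEquiv.coe_coe, h1]
    exact Submodule.liftQ_apply _ _ _
  have hφnorm : ∀ s : ↥(LinearMap.range L'), ‖φ s‖ = ‖s‖ := by
    rintro ⟨s, hs⟩
    obtain ⟨p, rfl⟩ := hs
    rw [hφ p (LinearMap.mem_range_self L' p)]
    rw [Submodule.coe_norm]
    exact hnorm p
  let LI : ↥(LinearMap.range L') →ₗᵢ[ℂ] EuclideanSpace ℂ (Fin n) := ⟨φ, hφnorm⟩
  let ψ : EuclideanSpace ℂ (Fin n) →ₗᵢ[ℂ] EuclideanSpace ℂ (Fin n) := LI.extend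
  have hψ : ∀ p : ℂ × ℂ, ψ (L' p) = L p := by
    intro p
    have hmem : L' p ∈ LinearMap.range L' := LinearMap.mem_range_self L' p
    have := LI.extend_apply ⟨L' p, hmem⟩
    rw [this]
    exact hφ p hmem
  have hψa : ψ a' = a := by
    have h1 := hψ (1, 0)
    rw [hLapp, hL'app] at h1
    simpa using h1
  have hψb : ψ b' = b := by
    have h1 := hψ (0, 1)
    rw [hLapp, hL'app] at h1
    simpa using h1
  -- the matrix of ψ
  set M : Matrix (Fin n) (Fin n) ℂ := Matrix.toEuclideanLin.symm ψ.toLinearMap with hM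
  have hMψ : ∀ v : EuclideanSpace ℂ (Fin n), Matrix.toEuclideanLin M v = ψ v := by
    intro v
    rw [hM, Matrix.toEuclideanLin.apply_symm_apply]
    rfl
  have hMmul : ∀ v : EuclideanSpace ℂ (Fin n), M.mulVec v = ψ v := by
    intro v
    have := hMψ v
    rw [Matrix.toEuclideanLin_apply] at this
    exact congrArg WithLp.ofLp this
  have hMU : M ∈ Matrix.unitaryGroup (Fin n) ℂ := by
    rw [Matrix.mem_unitaryGroup_iff']
    ext i j
    have h := ψ.inner_map_map (EuclideanSpace.single i (1 : ℂ))
      (EuclideanSpace.single j (1 : ℂ))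
    have hcol : ∀ k : Fin n, ∀ v : EuclideanSpace ℂ (Fin n), (ψ v : EuclideanSpace ℂ (Fin n)) k = (M.mulVec v) k := by
      intro k v; rw [hMmul]
    have hψeq : ∀ v : EuclideanSpace ℂ (Fin n), ψ v = WithLp.toLp 2 (M.mulVec v) := by
      intro v; rw [← hMψ v, Matrix.toEuclideanLin_apply]
    rw [hψeq, hψeq] at h
    simp only [PiLp.inner_apply, RCLike.inner_apply] at h
    simp [EuclideanSpace.single, Matrix.mulVec, dotProduct] at h
    rw [Matrix.mul_apply, Matrix.one_apply]
    simp only [Matrix.star_apply, RCLike.star_def]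
    simpa [eq_comm, mul_comm] using h
  refine ⟨⟨M, hMU⟩, ?_, ?_⟩
  · show M.mulVec a' = a
    rw [hMmul, hψa]
  · show M.mulVec b' = b
    rw [hMmul, hψb]

end Aux

/-- The Haar average `f̃(a,b) = ∫ f(Ua, Ub) dμ(U)` of a bounded
measurable function `f : ℂⁿ × ℂⁿ → ℝ` depends only on `‖a‖²`, `‖b‖²` and `⟪a, b⟫`. -/
theorem symmetrized_depends_on_invariants (n : ℕ)
    (μ : Measure (Matrix.unitaryGroup (Fin n) ℂ))
    [μ.IsHaarMeasure] [IsProbabilityMeasure μ]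
    (f : EuclideanSpace ℂ (Fin n) × EuclideanSpace ℂ (Fin n) → ℝ)
    (hf : Measurable f)
    (hbd : ∃ C, ∀ p, |f p| ≤ C)
    (a a' b b' : EuclideanSpace ℂ (Fin n))
    (ha : ‖a‖ = ‖a'‖) (hb : ‖b‖ = ‖b'‖)
    (hab : (inner ℂ a b : ℂ) = inner ℂ a' b') :
    ∫ U : Matrix.unitaryGroup (Fin n) ℂ,
        f (WithLp.toLp 2 ((U : Matrix (Fin n) (Fin n) ℂ).mulVec a),
           WithLp.toLp 2 ((U : Matrix (Fin n) (Fin n) ℂ).mulVec b)) ∂μ =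
      ∫ U : Matrix.unitaryGroup (Fin n) ℂ,
        f (WithLp.toLp 2 ((U : Matrix (Fin n) (Fin n) ℂ).mulVec a'),
           WithLp.toLp 2 ((U : Matrix (Fin n) (Fin n) ℂ).mulVec b')) ∂μ := by
  obtain ⟨V, hVa, hVb⟩ := exists_unitary_pair a a' b b' ha hb hab
  -- the map U ↦ U * V pushes μ to itself
  haveI : IsProbabilityMeasure (μ.map (· * V)) :=
    Measure.isProbabilityMeasure_map (measurable_mul_const V).aemeasurable
  have hmap : μ.map (· * V) = μ :=
    Measure.isHaarMeasure_eq_of_isProbabilityMeasure (μ.map (· * V)) μ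
  -- the integrand with (a', b') is measurable
  have hcont : Continuous fun U : Matrix.unitaryGroup (Fin n) ℂ =>
      ((EuclideanSpace.equiv (Fin n) ℂ).symm ((U : Matrix (Fin n) (Fin n) ℂ).mulVec a')) :=
    (EuclideanSpace.equiv (Fin n) ℂ).symm.continuous.comp
      ((continuous_subtype_val).matrix_mulVec continuous_const)
  have hcontb : Continuous fun U : Matrix.unitaryGroup (Fin n) ℂ =>
      ((EuclideanSpace.equiv (Fin n) ℂ).symm ((U : Matrix (Fin n) (Fin n) ℂ).mulVec b')) :=
    (EuclideanSpace.equiv (Fin n) ℂ).symm.continuous.comp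
      ((continuous_subtype_val).matrix_mulVec continuous_const)
  have hmeasF : Measurable fun U : Matrix.unitaryGroup (Fin n) ℂ =>
      f (WithLp.toLp 2 ((U : Matrix (Fin n) (Fin n) ℂ).mulVec a'),
         WithLp.toLp 2 ((U : Matrix (Fin n) (Fin n) ℂ).mulVec b')) :=
    hf.comp (hcont.measurable.prodMk hcontb.measurable)
  have key : ∫ U : Matrix.unitaryGroup (Fin n) ℂ,
      f (WithLp.toLp 2 ((U : Matrix (Fin n) (Fin n) ℂ).mulVec a'),
         WithLp.toLp 2 ((U : Matrix (Fin n) (Fin n) ℂ).mulVec b')) ∂μ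
    = ∫ U : Matrix.unitaryGroup (Fin n) ℂ,
      f (WithLp.toLp 2 (((U * V : Matrix.unitaryGroup (Fin n) ℂ) : Matrix (Fin n) (Fin n) ℂ).mulVec a'),
         WithLp.toLp 2 (((U * V : Matrix.unitaryGroup (Fin n) ℂ) : Matrix (Fin n) (Fin n) ℂ).mulVec b')) ∂μ := by
    conv_lhs => rw [← hmap]
    rw [integral_map (measurable_mul_const V).aemeasurable
      (hmeasF.aestronglyMeasurable)]
  rw [key]
  congr 1
  ext U
  have h1 : ((U * V : Matrix.unitaryGroup (Fin n) ℂ) : Matrix (Fin n) (Fin n) ℂ).mulVec a'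
      = (U : Matrix (Fin n) (Fin n) ℂ).mulVec a := by
    rw [Matrix.UnitaryGroup.mul_val, ← Matrix.mulVec_mulVec, hVa]
  have h2 : ((U * V : Matrix.unitaryGroup (Fin n) ℂ) : Matrix (Fin n) (Fin n) ℂ).mulVec b'
      = (U : Matrix (Fin n) (Fin n) ℂ).mulVec b := by
    rw [Matrix.UnitaryGroup.mul_val, ← Matrix.mulVec_mulVec, hVb]
  rw [h1, h2]
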